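/- Let (M, Δ) be a Garside monoid. For every word w of length p ≥ 2 over Div(Δ), the word N̄^Δ_{δ̃_p}(w) is Δ-normal, has length p, and represents the same element of M as w (so it equals the unique Δ-normal word of length p representing that element). Here δ̃_p is defined inductively by δ̃_2 := 1 and δ̃_p := δ̃_{p−1}|p−1|…|2|1. -/

import Mathlib

/-- Left-divisibility: `f ≼ g` iff `f * c = g` for some `c`. -/
def LDvd {M : Type*} [Monoid M] (f g : M) : Prop := ∃ c, f * c = g

/-- Right-divisibility: `f` right-divides `g` iff `c * f = g` for some `c`. -/
def RDvd {M : Type*} [Monoid M] (f g : M) : Prop := ∃ c, c * f = g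

/-- A Garside monoid: a cancellative monoid `M` together with a Garside element `Δ`,
satisfying conditions (i)–(iv) of the definition. -/
structure GarsideMonoid (M : Type*) [Monoid M] where
  /-- The Garside element. -/
  Δ : M
  mul_left_cancel : ∀ a b c : M, a * b = a * c → b = c
  mul_right_cancel : ∀ a b c : M, b * a = c * a → b = c
  /-- (i) a superadditive length-type map. -/
  lam : M → ℕ
  lam_superadd : ∀ f g : M, lam f + lam g ≤ lam (f * g)
  lam_ne_zero : ∀ g : M, g ≠ 1 → lam g ≠ 0
  /-- (ii) any two elements admit a left-gcd. -/
  exists_left_gcd : ∀ f g : M, ∃ d, LDvd d f ∧ LDvd d g ∧ ∀ e, LDvd e f → LDvd e g → LDvd e d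
  /-- (ii) any two elements admit a right-lcm. -/
  exists_right_lcm : ∀ f g : M, ∃ m, LDvd f m ∧ LDvd g m ∧ ∀ e, LDvd f e → LDvd g e → LDvd m e
  /-- (ii) any two elements admit a right-gcd. -/
  exists_right_gcd : ∀ f g : M, ∃ d, RDvd d f ∧ RDvd d g ∧ ∀ e, RDvd e f → RDvd e g → RDvd e d
  /-- (ii) any two elements admit a left-lcm. -/
  exists_left_lcm : ∀ f g : M, ∃ m, RDvd f m ∧ RDvd g m ∧ ∀ e, RDvd f e → RDvd g e → RDvd m e
  /-- (iii) the left- and right-divisors of `Δ` coincide. -/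
  ldvd_iff_rdvd : ∀ d : M, LDvd d Δ ↔ RDvd d Δ
  /-- (iii) the divisors of `Δ` generate `M`. -/
  closure_div : Submonoid.closure {d : M | LDvd d Δ} = ⊤
  /-- (iv) `Div(Δ)` is finite. -/
  div_finite : {d : M | LDvd d Δ}.Finite

/-- A word `s_1|…|s_p` (with entries in `Div(Δ)`) is `Δ`-normal if, for every `i < p` and
every `s ∈ Div(Δ)`, `s_i ≺ s` implies that `s` does not left-divide `s_i s_{i+1} ⋯ s_p`. -/
def DNormal {M : Type*} [Monoid M] (G : GarsideMonoid M) (L : List M) : Prop :=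
  ∀ i : ℕ, i + 1 < L.length → ∀ s : M, LDvd s G.Δ →
    LDvd (L.getD i 1) s → L.getD i 1 ≠ s → ¬ LDvd s ((L.drop i).prod)

/-- Apply `F` to the entries at (1-based) positions `i, i+1` of a word. -/
def applyAt {α : Type*} (F : α × α → α × α) : ℕ → List α → List α
  | 1, a :: b :: t => (F (a, b)).1 :: (F (a, b)).2 :: t
  | n + 2, a :: t => a :: applyAt F (n + 1) t
  | _, l => l

/-- Apply `F` successively at the positions listed in `u` (leftmost entry first). -/
def applySeq {α : Type*} (F : α × α → α × α) (u : List ℕ) (w : List α) : List α :=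
  u.foldl (fun v i => applyAt F i v) w

/-- The sequence of positions `δ_p`: `δ_2 = 1` and `δ_p = sh(δ_{p−1})|1|2|…|p−1`,
where `sh` shifts every entry by `+1`. -/
def deltaSeq : ℕ → List ℕ
  | 0 => []
  | p + 1 => (deltaSeq p).map (· + 1) ++ (List.range p).map (· + 1)

/-- The sequence of positions `δ̃_p`: `δ̃_2 = 1` and `δ̃_p = δ̃_{p−1}|p−1|…|2|1`. -/
def deltaTildeSeq : ℕ → List ℕ
  | 0 => []
  | p + 1 => deltaTildeSeq p ++ ((List.range p).map (· + 1)).reverse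






theorem applyAt_length {α : Type*} (F : α × α → α × α) :
    ∀ (n : ℕ) (l : List α), (applyAt F n l).length = l.length
  | 0, l => by simp [applyAt]
  | 1, [] => by simp [applyAt]
  | 1, [a] => by simp [applyAt]
  | 1, a :: b :: t => by simp [applyAt]
  | n + 2, [] => by simp [applyAt]
  | n + 2, a :: t => by
    simp only [applyAt, List.length_cons]
    rw [applyAt_length F (n + 1) t]

theorem applyAt_append {α : Type*} (F : α × α → α × α) :
    ∀ (n : ℕ) (v t : List α), 1 ≤ n → n + 1 ≤ v.length →
      applyAt F n (v ++ t) = applyAt F n v ++ t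
  | 0, v, t, h, _ => absurd h (by decide)
  | 1, [], t, _, h => by simp at h
  | 1, [a], t, _, h => by simp at h
  | 1, a :: b :: l, t, _, _ => by simp [applyAt]
  | n + 2, [], t, _, h => by simp at h
  | n + 2, a :: l, t, _, h => by
    have h2 : applyAt F (n + 2) ((a :: l) ++ t) = a :: applyAt F (n + 1) (l ++ t) := by
      simp [applyAt]
    rw [h2, applyAt_append F (n + 1) l t (by omega) (by simp at h; omega)]
    simp [applyAt]

theorem applyAt_last {α : Type*} (F : α × α → α × α) :
    ∀ (l : List α) (b a : α),
      applyAt F (l.length + 1) (l ++ [b, a]) = l ++ [(F (b, a)).1, (F (b, a)).2]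
  | [], b, a => by simp [applyAt]
  | c :: l, b, a => by
    have h2 : applyAt F (l.length + 1 + 1) ((c :: l) ++ [b, a])
        = c :: applyAt F (l.length + 1) (l ++ [b, a]) := by simp [applyAt]
    simp only [List.length_cons]
    rw [h2, applyAt_last F l b a]
    simp

theorem applySeq_nil {α : Type*} (F : α × α → α × α) (w : List α) :
    applySeq F [] w = w := rfl

theorem applySeq_cons {α : Type*} (F : α × α → α × α) (i : ℕ) (u : List ℕ) (w : List α) :
    applySeq F (i :: u) w = applySeq F u (applyAt F i w) := rfl

theorem applySeq_append {α : Type*} (F : α × α → α × α) (u v : List ℕ) (w : List α) :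
    applySeq F (u ++ v) w = applySeq F v (applySeq F u w) := by
  simp [applySeq, List.foldl_append]

theorem applySeq_append_right {α : Type*} (F : α × α → α × α) :
    ∀ (u : List ℕ) (v t : List α), (∀ i ∈ u, 1 ≤ i ∧ i + 1 ≤ v.length) →
      applySeq F u (v ++ t) = applySeq F u v ++ t
  | [], v, t, _ => rfl
  | i :: u, v, t, h => by
    have hi := h i List.mem_cons_self
    rw [applySeq_cons, applySeq_cons, applyAt_append F i v t hi.1 hi.2,
      applySeq_append_right F u (applyAt F i v) t (fun j hj => by
        rw [applyAt_length]; exact h j (List.mem_cons_of_mem i hj))]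

def descSeq (p : ℕ) : List ℕ := ((List.range p).map (· + 1)).reverse

theorem deltaTildeSeq_succ (p : ℕ) : deltaTildeSeq (p + 1) = deltaTildeSeq p ++ descSeq p := rfl

theorem descSeq_succ (p : ℕ) : descSeq (p + 1) = (p + 1) :: descSeq p := by
  simp [descSeq, List.range_succ]

theorem mem_descSeq {p i : ℕ} (h : i ∈ descSeq p) : 1 ≤ i ∧ i + 1 ≤ p + 1 := by
  simp [descSeq] at h
  obtain ⟨j, hj, rfl⟩ := h
  omega

theorem mem_deltaTildeSeq : ∀ (p i : ℕ), i ∈ deltaTildeSeq p → 1 ≤ i ∧ i + 1 ≤ p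
  | 0, i, h => by simp [deltaTildeSeq] at h
  | p + 1, i, h => by
    rw [deltaTildeSeq_succ, List.mem_append] at h
    rcases h with h | h
    · have := mem_deltaTildeSeq p i h; omega
    · have := mem_descSeq h; omega

def RP {α : Type*} (F : α × α → α × α) (v : List α) (a : α) : List α :=
  applySeq F (descSeq v.length) (v ++ [a])

theorem RP_nil {α : Type*} (F : α × α → α × α) (a : α) : RP F [] a = [a] := rfl

theorem RP_step {α : Type*} (F : α × α → α × α) (v : List α) (b a : α) :
    RP F (v ++ [b]) a = RP F v (F (b, a)).1 ++ [(F (b, a)).2] := by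
  simp only [RP, List.length_append, List.length_singleton]
  rw [descSeq_succ, List.append_assoc]
  rw [applySeq_cons]
  have h2 : ([b] ++ [a] : List α) = [b, a] := rfl
  rw [h2, applyAt_last]
  have h3 : v ++ [(F (b, a)).1, (F (b, a)).2] = (v ++ [(F (b, a)).1]) ++ [(F (b, a)).2] := by
    simp
  rw [h3, applySeq_append_right F _ _ _ (fun i hi => by
    have := mem_descSeq hi
    simp only [List.length_append, List.length_singleton]
    omega)]



section Basics

variable {M : Type*} [Monoid M]

theorem ldvd_refl (a : M) : LDvd a a := ⟨1, mul_one a⟩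

theorem ldvd_trans {a b c : M} : LDvd a b → LDvd b c → LDvd a c
  | ⟨u, hu⟩, ⟨v, hv⟩ => ⟨u * v, by rw [← mul_assoc, hu, hv]⟩

theorem rdvd_trans {a b c : M} : RDvd a b → RDvd b c → RDvd a c
  | ⟨u, hu⟩, ⟨v, hv⟩ => ⟨v * u, by rw [mul_assoc, hu, hv]⟩

theorem ldvd_mul (a b : M) : LDvd a (a * b) := ⟨b, rfl⟩

theorem gm_lam_one (G : GarsideMonoid M) : G.lam 1 = 0 := by
  have h := G.lam_superadd 1 1
  rw [one_mul] at h
  omega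

theorem gm_unit_left (G : GarsideMonoid M) {a b : M} (h : a * b = 1) : a = 1 := by
  by_contra ha
  have h1 := G.lam_superadd a b
  rw [h, gm_lam_one] at h1
  exact G.lam_ne_zero a ha (by omega)

theorem gm_unit_right (G : GarsideMonoid M) {a b : M} (h : a * b = 1) : b = 1 := by
  by_contra hb
  have h1 := G.lam_superadd a b
  rw [h, gm_lam_one] at h1
  exact G.lam_ne_zero b hb (by omega)

theorem gm_ldvd_antisymm (G : GarsideMonoid M) {a b : M} (h1 : LDvd a b) (h2 : LDvd b a) : a = b := by
  obtain ⟨u, hu⟩ := h1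
  obtain ⟨v, hv⟩ := h2
  have h3 : a * (u * v) = a * 1 := by rw [← mul_assoc, hu, hv, mul_one]
  have huv := G.mul_left_cancel _ _ _ h3
  rw [gm_unit_left G huv, mul_one] at hu
  exact hu

theorem gm_ldvd_cancel (G : GarsideMonoid M) {a b c : M} (h : LDvd (a * b) (a * c)) : LDvd b c := by
  obtain ⟨u, hu⟩ := h
  exact ⟨u, G.mul_left_cancel _ _ _ (by rw [← mul_assoc]; exact hu)⟩

theorem gm_ldvd_mul_left {M : Type*} [Monoid M] (c : M) {a b : M} (h : LDvd a b) : LDvd (c * a) (c * b) := by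
  obtain ⟨u, hu⟩ := h
  exact ⟨u, by rw [mul_assoc, hu]⟩

theorem gm_memD_of_rdvd (G : GarsideMonoid M) {a b : M} (h : RDvd a b) (hb : LDvd b G.Δ) : LDvd a G.Δ := by
  rw [G.ldvd_iff_rdvd] at hb ⊢
  exact rdvd_trans h hb

end Basics

def PN {M : Type*} [Monoid M] (G : GarsideMonoid M) (a b : M) : Prop :=
  ∀ s : M, LDvd s G.Δ → LDvd s (a * b) → LDvd s a

section PNs

variable {M : Type*} [Monoid M]

theorem gm_pn_of_dnormal_pair (G : GarsideMonoid M) {a b : M} (ha : LDvd a G.Δ) (hb : LDvd b G.Δ)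
    (hab : DNormal G [a, b]) : PN G a b := by
  intro s hs hsd
  obtain ⟨m, ham, hsm, hmin⟩ := G.exists_right_lcm a s
  have hmΔ : LDvd m G.Δ := hmin _ ha hs
  have hmab : LDvd m (a * b) := hmin _ (ldvd_mul a b) hsd
  by_cases hm : a = m
  · rw [hm]; exact hsm
  · exact absurd (by simpa using hmab)
      (hab 0 (by simp) m hmΔ (by simpa using ham) (by simpa using hm))

/-- The domino rule, proved via the left-lcm. -/
theorem gm_domino (G : GarsideMonoid M) {s1 s2 t2 t0 t1 y1 y2 : M}
    (hs1 : LDvd s1 G.Δ) (hs2 : LDvd s2 G.Δ) (ht2 : LDvd t2 G.Δ)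
    (ht0 : LDvd t0 G.Δ) (ht1 : LDvd t1 G.Δ) (hy1 : LDvd y1 G.Δ) (hy2 : LDvd y2 G.Δ)
    (hpn12 : PN G s1 s2) (hpn0 : PN G t0 y1) (hpn1 : PN G t1 y2)
    (hsq1 : t0 * y1 = s1 * t1) (hsq2 : t1 * y2 = s2 * t2) : PN G y1 y2 := by
  have hs1t0 : LDvd s1 t0 := hpn0 s1 hs1 (by rw [hsq1]; exact ldvd_mul _ _)
  obtain ⟨e0, he0⟩ := hs1t0
  have ht1e : t1 = e0 * y1 :=
    (G.mul_left_cancel s1 _ _ (by rw [← hsq1, ← he0, mul_assoc])).symm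
  have hs2t1 : LDvd s2 t1 := hpn1 s2 hs2 (by rw [hsq2]; exact ldvd_mul _ _)
  obtain ⟨e1, he1⟩ := hs2t1
  have ht2e : t2 = e1 * y2 :=
    (G.mul_left_cancel s2 _ _ (by rw [← hsq2, ← he1, mul_assoc])).symm
  have htriv : ∀ d : M, LDvd d e0 → LDvd d s2 → d = 1 := by
    intro d hde0 hds2
    have h1 : LDvd (s1 * d) t0 := by
      obtain ⟨c, hc⟩ := hde0
      exact ⟨c, by rw [mul_assoc, hc, he0]⟩
    have h3 : LDvd (s1 * d) s1 :=
      hpn12 _ (ldvd_trans h1 ht0) (gm_ldvd_mul_left s1 hds2)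
    obtain ⟨c, hc⟩ := h3
    exact gm_unit_left G
      (G.mul_left_cancel s1 _ _ (by rw [← mul_assoc, hc, mul_one]))
  intro s hsD hs
  obtain ⟨m, hy1m, hsm, hmin⟩ := G.exists_right_lcm y1 s
  have hmΔ : LDvd m G.Δ := hmin _ hy1 hsD
  have hmy : LDvd m (y1 * y2) := hmin _ (ldvd_mul _ _) hs
  obtain ⟨u, hu⟩ := hy1m
  have huy2 : LDvd u y2 := gm_ldvd_cancel G (a := y1) (by rw [hu]; exact hmy)
  have huD : LDvd u G.Δ := gm_memD_of_rdvd G ⟨y1, hu⟩ hmΔ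
  have he1u : LDvd (e1 * u) G.Δ :=
    ldvd_trans (by rw [ht2e]; exact gm_ldvd_mul_left e1 huy2) ht2
  have hy1u : LDvd (y1 * u) G.Δ := by rw [hu]; exact hmΔ
  -- the core: t1 * u divides Δ, via the left-lcm of e1 and y1
  have hTu : LDvd (t1 * u) G.Δ := by
    obtain ⟨W, hW⟩ := (G.ldvd_iff_rdvd u).mp huD
    obtain ⟨g, hg⟩ := (G.ldvd_iff_rdvd _).mp he1u
    have hge1 : g * e1 = W := G.mul_right_cancel u _ _ (by rw [mul_assoc, hg, hW])
    obtain ⟨h2, hh2⟩ := (G.ldvd_iff_rdvd _).mp hy1u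
    have hhy1 : h2 * y1 = W := G.mul_right_cancel u _ _ (by rw [mul_assoc, hh2, hW])
    obtain ⟨V, he1V, hy1V, hVmin⟩ := G.exists_left_lcm e1 y1
    obtain ⟨c, hc⟩ := hVmin t1 ⟨s2, he1⟩ ⟨e0, ht1e.symm⟩
    obtain ⟨aa, haa⟩ := he1V
    obtain ⟨bb, hbb⟩ := hy1V
    have hca : c * aa = s2 := G.mul_right_cancel e1 _ _ (by rw [mul_assoc, haa, hc, he1])
    have hcb : c * bb = e0 := G.mul_right_cancel y1 _ _ (by rw [mul_assoc, hbb, hc]; exact ht1e)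
    have hc1 : c = 1 := htriv c ⟨bb, hcb⟩ ⟨aa, hca⟩
    have hVt : V = t1 := by rw [← hc, hc1, one_mul]
    obtain ⟨k, hk⟩ := hVmin W ⟨g, hge1⟩ ⟨h2, hhy1⟩
    rw [G.ldvd_iff_rdvd]
    exact ⟨k, by rw [← mul_assoc, ← hVt, hk, hW]⟩
  have ht1u : LDvd (t1 * u) t1 := hpn1 (t1 * u) hTu (gm_ldvd_mul_left t1 huy2)
  obtain ⟨c', hc'⟩ := ht1u
  have hu1 : u = 1 := gm_unit_left G
    (G.mul_left_cancel t1 _ _ (by rw [← mul_assoc, hc', mul_one]))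
  rw [hu1, mul_one] at hu
  rw [← hu] at hsm
  exact hsm

end PNs

section Locality

variable {M : Type*} [Monoid M]

theorem gm_head_dvd (G : GarsideMonoid M) :
    ∀ (t : List M) (x : M), (∀ z ∈ x :: t, LDvd z G.Δ) →
      List.Chain' (PN G) (x :: t) → ∀ s : M, LDvd s G.Δ → LDvd s (x :: t).prod → LDvd s x
  | [], x, _, _, s, _, hs => by simpa using hs
  | y :: r, x, hmem, hch, s, hsD, hs => by
    rw [show List.Chain' (PN G) (x :: y :: r) ↔ _ from List.isChain_cons_cons] at hch
    obtain ⟨hxy, hch'⟩ := hch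
    obtain ⟨m, hxm, hsm, hmin⟩ := G.exists_right_lcm x s
    have hxD : LDvd x G.Δ := hmem x (by simp)
    have hmΔ : LDvd m G.Δ := hmin _ hxD hsD
    have hprod : (x :: y :: r).prod = x * (y :: r).prod := by simp
    have hmp : LDvd m ((x :: y :: r).prod) := hmin _ (by rw [hprod]; exact ldvd_mul _ _) hs
    obtain ⟨u, hu⟩ := hxm
    have huyr : LDvd u (y :: r).prod := by
      apply gm_ldvd_cancel G (a := x)
      rw [hu, ← hprod]
      exact hmp
    have huD : LDvd u G.Δ := gm_memD_of_rdvd G ⟨x, hu⟩ hmΔ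
    have huy : LDvd u y :=
      gm_head_dvd G r y (fun z hz => hmem z (by simp [hz])) hch' u huD huyr
    have hsxy : LDvd s (x * y) := by
      refine ldvd_trans ?_ (gm_ldvd_mul_left x huy)
      rw [hu]
      exact hsm
    exact hxy s hsD hsxy

theorem gm_chain'_drop {α : Type*} {R : α → α → Prop} :
    ∀ (i : ℕ) (l : List α), List.Chain' R l → List.Chain' R (l.drop i)
  | 0, l, h => h
  | i + 1, [], _ => List.isChain_nil
  | i + 1, a :: t, h => by
    rw [List.drop_succ_cons]
    exact gm_chain'_drop i t h.tail

theorem gm_dnormal_of_chain (G : GarsideMonoid M) {L : List M}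
    (hmem : ∀ x ∈ L, LDvd x G.Δ) (hch : List.Chain' (PN G) L) : DNormal G L := by
  intro i hi s hsD hls hne hdvd
  have hilen : i < L.length := by omega
  have hdrop : L.drop i = L.getD i 1 :: L.drop (i + 1) := by
    rw [List.getD_eq_getElem L 1 hilen]
    exact List.drop_eq_getElem_cons hilen
  have hchd : List.Chain' (PN G) (L.getD i 1 :: L.drop (i + 1)) := by
    rw [← hdrop]
    exact gm_chain'_drop i L hch
  have hmemd : ∀ z ∈ L.getD i 1 :: L.drop (i + 1), LDvd z G.Δ := by
    intro z hz
    rw [← hdrop] at hz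
    exact hmem z (List.mem_of_mem_drop hz)
  have hhead := gm_head_dvd G _ _ hmemd hchd s hsD (by rw [← hdrop]; exact hdvd)
  exact hne (gm_ldvd_antisymm G hls hhead)

theorem gm_dnormal_tail (G : GarsideMonoid M) {a : M} {t : List M}
    (h : DNormal G (a :: t)) : DNormal G t := by
  intro i hi s hsD hls hne hdvd
  have h2 := h (i + 1) (by simpa using Nat.succ_lt_succ hi) s hsD
  simp only [List.getD_cons_succ] at h2
  exact h2 hls hne (by simpa [List.drop_succ_cons] using hdvd)

theorem gm_unique (G : GarsideMonoid M) (v₁ : List M) :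
    ∀ (v₂ : List M), (∀ x ∈ v₁, LDvd x G.Δ) → (∀ x ∈ v₂, LDvd x G.Δ) →
      DNormal G v₁ → DNormal G v₂ → v₁.length = v₂.length → v₁.prod = v₂.prod → v₁ = v₂ := by
  induction v₁ with
  | nil =>
    intro v₂ _ _ _ _ hlen _
    have h0 : v₂.length = 0 := by simpa using hlen.symm
    exact (List.length_eq_zero_iff.mp h0).symm
  | cons a t ih =>
    intro v₂ h1 h2 hn1 hn2 hlen hprod
    obtain ⟨b, t', rfl⟩ : ∃ b t', v₂ = b :: t' := by
      cases v₂ with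
      | nil => simp at hlen
      | cons b t' => exact ⟨b, t', rfl⟩
    have hab : a = b := by
      cases t with
      | nil =>
        have ht' : t' = [] := by
          rw [List.length_cons, List.length_cons, List.length_nil] at hlen
          exact List.length_eq_zero_iff.mp (by omega)
        subst ht'
        simpa using hprod
      | cons c r =>
        have ht'len : 1 ≤ t'.length := by simp at hlen; omega
        obtain ⟨d, hdΔ, hdp, hdmax⟩ := G.exists_left_gcd G.Δ ((a :: c :: r).prod)
        have had : LDvd a d := hdmax a (h1 a (by simp)) ⟨(c :: r).prod, by simp⟩
        have hbd : LDvd b d := hdmax b (h2 b (by simp)) ⟨t'.prod, by rw [hprod]; simp⟩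
        have had' : a = d := by
          by_contra hne
          exact hn1 0 (by simp) d hdΔ (by simpa using had) (by simpa using hne)
            (by simpa using hdp)
        have hbd' : b = d := by
          by_contra hne
          refine hn2 0 (by simp; omega) d hdΔ (by simpa using hbd) (by simpa using hne) ?_
          simp only [List.drop_zero]
          rw [← hprod]
          exact hdp
        rw [had', hbd']
    subst hab
    have htt : t = t' := by
      refine ih t' (fun x hx => h1 x (by simp [hx])) (fun x hx => h2 x (by simp [hx]))
        (gm_dnormal_tail G hn1) (gm_dnormal_tail G hn2) (by simpa using hlen) ?_
      have hp2 : a * t.prod = a * t'.prod := by simpa using hprod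
      exact G.mul_left_cancel _ _ _ hp2
    rw [htt]

end Locality

section Pass

variable {M : Type*} [Monoid M]

theorem gm_pass (G : GarsideMonoid M) (NN : M × M → M × M)
    (hNN : ∀ s t : M, LDvd s G.Δ → LDvd t G.Δ →
      LDvd (NN (s, t)).1 G.Δ ∧ LDvd (NN (s, t)).2 G.Δ ∧
      (NN (s, t)).1 * (NN (s, t)).2 = s * t ∧ DNormal G [(NN (s, t)).1, (NN (s, t)).2]) :
    ∀ (v : List M), (∀ x ∈ v, LDvd x G.Δ) → List.Chain' (PN G) v →
      ∀ a : M, LDvd a G.Δ →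
      (∀ x ∈ RP NN v a, LDvd x G.Δ) ∧ List.Chain' (PN G) (RP NN v a) ∧
      (RP NN v a).prod = v.prod * a ∧ (RP NN v a).length = v.length + 1 := by
  intro v
  induction v using List.reverseRecOn with
  | nil =>
    intro _ _ a ha
    rw [RP_nil]
    refine ⟨?_, List.isChain_singleton a, by simp, by simp⟩
    intro x hx
    simp at hx
    rw [hx]
    exact ha
  | append_singleton v b ih =>
    intro hmem hch a ha
    have hbD : LDvd b G.Δ := hmem b (by simp)
    obtain ⟨hx, hy, hxy, hdn⟩ := hNN b a hbD ha
    set x := (NN (b, a)).1 with hxdef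
    set y := (NN (b, a)).2 with hydef
    have hpnxy : PN G x y := gm_pn_of_dnormal_pair G hx hy hdn
    have hmemv : ∀ z ∈ v, LDvd z G.Δ := fun z hz => hmem z (by simp [hz])
    have hchv : List.Chain' (PN G) v := (List.isChain_append.mp hch).1
    obtain ⟨ih1, ih2, ih3, ih4⟩ := ih hmemv hchv x hx
    rw [RP_step]
    refine ⟨?_, ?_, ?_, ?_⟩
    · intro z hz
      rcases List.mem_append.mp hz with h | h
      · exact ih1 z h
      · rw [List.mem_singleton] at h
        subst h
        exact hy
    · refine List.isChain_append.mpr ?_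
      refine ⟨ih2, by simp, ?_⟩
      intro z hz y' hy'
      simp only [List.head?_cons, Option.mem_some_iff] at hy'
      subst hy'
      rcases v.eq_nil_or_concat with rfl | ⟨v', b', rfl⟩
      · rw [RP_nil] at hz
        simp only [List.getLast?_singleton, Option.mem_some_iff] at hz
        subst hz
        exact hpnxy
      · simp only [List.concat_eq_append] at hz hmemv hch ⊢
        rw [RP_step, List.getLast?_concat] at hz
        rw [Option.mem_some_iff] at hz
        subst hz
        have hb'D : LDvd b' G.Δ := hmemv b' (by simp)
        obtain ⟨hx', hy1, hx'y1, hdn'⟩ := hNN b' x hb'D hx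
        have hpn' : PN G (NN (b', x)).1 (NN (b', x)).2 :=
          gm_pn_of_dnormal_pair G hx' hy1 hdn'
        have hpnb : PN G b' b := by
          obtain ⟨-, -, hlink⟩ := List.isChain_append.mp hch
          exact hlink b' (by simp [List.getLast?_concat]) b (by simp)
        exact gm_domino G hb'D hbD ha hx' hx hy1 hy hpnb hpn' hpnxy hx'y1 hxy
    · rw [List.prod_append, ih3]
      simp only [List.prod_cons, List.prod_nil, List.prod_append, mul_one]
      rw [mul_assoc, hxy, ← mul_assoc]
    · simp [← hxdef, ih4]

theorem gm_main (G : GarsideMonoid M) (NN : M × M → M × M)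
    (hNN : ∀ s t : M, LDvd s G.Δ → LDvd t G.Δ →
      LDvd (NN (s, t)).1 G.Δ ∧ LDvd (NN (s, t)).2 G.Δ ∧
      (NN (s, t)).1 * (NN (s, t)).2 = s * t ∧ DNormal G [(NN (s, t)).1, (NN (s, t)).2]) :
    ∀ (w : List M), (∀ x ∈ w, LDvd x G.Δ) →
      (∀ x ∈ applySeq NN (deltaTildeSeq w.length) w, LDvd x G.Δ) ∧
      List.Chain' (PN G) (applySeq NN (deltaTildeSeq w.length) w) ∧
      (applySeq NN (deltaTildeSeq w.length) w).prod = w.prod ∧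
      (applySeq NN (deltaTildeSeq w.length) w).length = w.length := by
  intro w
  induction w using List.reverseRecOn with
  | nil =>
    intro _
    exact ⟨by simp [deltaTildeSeq, applySeq], List.isChain_nil, rfl, rfl⟩
  | append_singleton w' a ih =>
    intro hmem
    have hmemw' : ∀ x ∈ w', LDvd x G.Δ := fun x hx => hmem x (by simp [hx])
    have haD : LDvd a G.Δ := hmem a (by simp)
    obtain ⟨ih1, ih2, ih3, ih4⟩ := ih hmemw'
    have hlen : (w' ++ [a]).length = w'.length + 1 := by simp
    rw [hlen, deltaTildeSeq_succ, applySeq_append,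
      applySeq_append_right NN (deltaTildeSeq w'.length) w' [a]
        (fun i hi => mem_deltaTildeSeq w'.length i hi)]
    set V := applySeq NN (deltaTildeSeq w'.length) w' with hV
    have hRP : RP NN V a = applySeq NN (descSeq w'.length) (V ++ [a]) := by
      unfold RP
      rw [ih4]
    rw [← hRP]
    obtain ⟨p1, p2, p3, p4⟩ := gm_pass G NN hNN V ih1 ih2 a haD
    refine ⟨p1, p2, ?_, ?_⟩
    · rw [p3, ih3]
      simp
    · rw [p4, ih4]

end Pass


/-- In a Garside monoid `(M, Δ)`, for every word `w` of length `p ≥ 2`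
over `Div(Δ)`, the word `N̄^Δ_{δ̃_p}(w)` is `Δ`-normal, has length `p`, and represents the
same element of `M` as `w` (hence equals the unique `Δ`-normal word of length `p`
representing that element). -/
theorem garsideMonoid_deltaTildeSeq_recipe {M : Type*} [Monoid M] (G : GarsideMonoid M)
    (NN : M × M → M × M)
    (hNN : ∀ s t : M, LDvd s G.Δ → LDvd t G.Δ →
      LDvd (NN (s, t)).1 G.Δ ∧ LDvd (NN (s, t)).2 G.Δ ∧
      (NN (s, t)).1 * (NN (s, t)).2 = s * t ∧ DNormal G [(NN (s, t)).1, (NN (s, t)).2])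
    (w : List M) (hw : ∀ x ∈ w, LDvd x G.Δ) (hp : 2 ≤ w.length) :
    (∀ x ∈ applySeq NN (deltaTildeSeq w.length) w, LDvd x G.Δ) ∧
    DNormal G (applySeq NN (deltaTildeSeq w.length) w) ∧
    (applySeq NN (deltaTildeSeq w.length) w).length = w.length ∧
    (applySeq NN (deltaTildeSeq w.length) w).prod = w.prod ∧
    (∀ v : List M, (∀ x ∈ v, LDvd x G.Δ) → DNormal G v → v.length = w.length →
      v.prod = w.prod → v = applySeq NN (deltaTildeSeq w.length) w) := by

  obtain ⟨h1, h2, h3, h4⟩ := gm_main G NN hNN w hw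
  have hdn := gm_dnormal_of_chain G h1 h2
  refine ⟨h1, hdn, h4, h3, ?_⟩
  intro v hv hnv hlenv hprodv
  exact gm_unique G v _ hv h1 hnv hdn (hlenv.trans h4.symm) (hprodv.trans h3.symm)
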